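/- arXiv:1801.08904 — 3 statements merged into one kernel-verified Lean document; each statement's English description precedes it below -/
import Mathlib

section
/- Let 0 < α < 1 and let f : ℝ → ℝ be continuously differentiable on [0,T]. Then for every t ∈ (0,T], D_*^α f(t) = (1/(1−α)) ( f(t) − E_{α,1}(−α t^α/(1−α)) f(0) ) − (α/(1−α)²) ∫_0^t f(τ) (t−τ)^{α−1} E_{α,α}(−α (t−τ)^α/(1−α)) dτ. -/
open Set

/-- Two-parameter Mittag-Leffler function `E_{α,β}(z) = ∑ₖ zᵏ / Γ(αk + β)`. -/
noncomputable def mittagLeffler (α β z : ℝ) : ℝ :=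
  ∑' k : ℕ, z ^ k / Real.Gamma (α * k + β)

/-- Atangana–Baleanu fractional derivative of order `α` with base point `0`
(normalization `M(α) = 1`). -/
noncomputable def abDeriv (α : ℝ) (f : ℝ → ℝ) (t : ℝ) : ℝ :=
  (1 / (1 - α)) * ∫ s in (0:ℝ)..t, deriv f s *
    mittagLeffler α 1 (-α * (t - s) ^ α / (1 - α))

open MeasureTheory Real Filter


lemma gamma_lower (x q : ℝ) (hx : 1 ≤ x) (hq : 0 < q) :
    q ^ (x - 1) * Real.exp (-(q + 1)) ≤ Real.Gamma x := by
  have hx0 : 0 < x := lt_of_lt_of_le one_pos hx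
  rw [Real.Gamma_eq_integral hx0]
  have hInt : IntegrableOn (fun t : ℝ => Real.exp (-t) * t ^ (x - 1)) (Ioi 0) :=
    Real.GammaIntegral_convergent hx0
  have hsub : Ioc q (q + 1) ⊆ Ioi (0:ℝ) := fun t ht => lt_trans hq ht.1
  have h1 : ∫ t in Ioc q (q+1), Real.exp (-t) * t ^ (x - 1) ≤
      ∫ t in Ioi 0, Real.exp (-t) * t ^ (x - 1) := by
    apply setIntegral_mono_set hInt
    · filter_upwards [ae_restrict_mem measurableSet_Ioi] with t ht
      have ht' : (0:ℝ) < t := ht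
      positivity
    · exact Filter.Eventually.of_forall hsub
  refine le_trans ?_ h1
  have h2 : q ^ (x-1) * Real.exp (-(q+1)) * (volume (Ioc q (q+1))).toReal ≤
      ∫ t in Ioc q (q+1), Real.exp (-t) * t ^ (x - 1) := by
    rw [mul_comm, ← smul_eq_mul, ← measureReal_def]
    apply setIntegral_ge_of_const_le measurableSet_Ioc
    · exact (measure_Ioc_lt_top).ne
    · intro t ht
      have h1t : q ≤ t := le_of_lt ht.1
      have : Real.exp (-(q+1)) ≤ Real.exp (-t) := by
        apply Real.exp_le_exp.2; linarith [ht.2]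
      calc q ^ (x-1) * Real.exp (-(q+1)) ≤ t ^ (x-1) * Real.exp (-t) := by
            apply mul_le_mul (Real.rpow_le_rpow hq.le h1t (by linarith)) this
              (Real.exp_pos _).le (Real.rpow_nonneg (by linarith [hq.le, ht.1]) _)
        _ = Real.exp (-t) * t ^ (x-1) := mul_comm _ _
    · exact hInt.mono_set hsub
  have : (volume (Ioc q (q+1))).toReal = 1 := by
    simp [Real.volume_Ioc]
  rw [this, mul_one] at h2
  exact h2

lemma summable_key {α β : ℝ} (hα : 0 < α) (hβ : 0 < β) {R : ℝ} (hR : 0 ≤ R) :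
    Summable (fun k : ℕ => ((k:ℝ)+1) * R^k / Real.Gamma (α*k+β)) := by
  set q : ℝ := max 1 ((2*(R+1)) ^ (α⁻¹)) with hqdef
  have hq1 : (1:ℝ) ≤ q := le_max_left _ _
  have hq : 0 < q := lt_of_lt_of_le one_pos hq1
  have hqα : 2*(R+1) ≤ q ^ α := by
    calc 2*(R+1) = ((2*(R+1)) ^ (α⁻¹)) ^ α := by
          rw [Real.rpow_inv_rpow (by positivity) hα.ne']
      _ ≤ q ^ α := Real.rpow_le_rpow (by positivity) (le_max_right _ _) hα.le
  have hRq : R / q ^ α ≤ 1/2 := by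
    rw [div_le_div_iff₀ (by positivity) (by norm_num)]
    nlinarith
  set C : ℝ := Real.exp (q+1) * q ^ (1 - β) with hC
  have hCpos : 0 < C := by positivity
  apply summable_of_isBigO_nat (g := fun k : ℕ => ((k:ℝ)+1) * (1/2:ℝ)^k)
  · have h1 : Summable (fun k : ℕ => ((k:ℝ)) * (1/2:ℝ)^k) := by
      simpa using summable_pow_mul_geometric_of_norm_lt_one (R := ℝ) 1
        (r := (1/2:ℝ)) (by norm_num)
    have h2 : Summable (fun k : ℕ => (1/2:ℝ)^k) := summable_geometric_of_lt_one (by norm_num) (by norm_num)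
    simpa [add_mul] using h1.add h2
  · apply Asymptotics.IsBigO.of_bound C
    have hev : ∀ᶠ (k:ℕ) in atTop, (1:ℝ) ≤ α * k + β := by
      have : Tendsto (fun k : ℕ => α * k + β) atTop atTop := by
        apply Tendsto.atTop_add _ tendsto_const_nhds
        exact (tendsto_natCast_atTop_atTop).const_mul_atTop hα
      exact this.eventually_ge_atTop 1
    filter_upwards [hev] with k hk
    have hΓpos : 0 < Real.Gamma (α*k+β) := Real.Gamma_pos_of_pos (by linarith)
    have hlow : q ^ (α*k+β-1) * Real.exp (-(q+1)) ≤ Real.Gamma (α*k+β) :=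
      gamma_lower _ q hk hq
    have hlowpos : 0 < q ^ (α*k+β-1) * Real.exp (-(q+1)) := by positivity
    have hknn : (0:ℝ) ≤ (k:ℝ)+1 := by positivity
    have step1 : ((k:ℝ)+1) * R^k / Real.Gamma (α*k+β) ≤
        ((k:ℝ)+1) * R^k / (q ^ (α*k+β-1) * Real.exp (-(q+1))) :=
      div_le_div_of_nonneg_left (by positivity) hlowpos hlow
    have hqsplit : q ^ (α*k+β-1) = (q^α)^k * q ^ (β-1) := by
      rw [← Real.rpow_natCast (q^α) k, ← Real.rpow_mul hq.le, ← Real.rpow_add hq]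
      ring_nf
    have step2 : ((k:ℝ)+1) * R^k / (q ^ (α*k+β-1) * Real.exp (-(q+1))) =
        C * (((k:ℝ)+1) * (R / q^α)^k) := by
      have e1 : q ^ (β-1) = (q ^ (1-β))⁻¹ := by
        rw [← Real.rpow_neg hq.le]; congr 1; ring
      have p1 : (0:ℝ) < q ^ (1-β) := Real.rpow_pos_of_pos hq _
      have p2 : (0:ℝ) < (q^α)^k := pow_pos (Real.rpow_pos_of_pos hq _) k
      rw [hqsplit, hC, Real.exp_neg, div_pow, e1]
      field_simp
    have step3 : ((k:ℝ)+1) * (R / q^α)^k ≤ ((k:ℝ)+1) * (1/2:ℝ)^k := by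
      apply mul_le_mul_of_nonneg_left _ hknn
      exact pow_le_pow_left₀ (by positivity) hRq k
    have hfin : ((k:ℝ)+1) * R^k / Real.Gamma (α*k+β) ≤ C * (((k:ℝ)+1) * (1/2:ℝ)^k) := by
      calc ((k:ℝ)+1) * R^k / Real.Gamma (α*k+β) ≤ _ := step1
        _ = _ := step2
        _ ≤ C * (((k:ℝ)+1) * (1/2:ℝ)^k) := by
            exact mul_le_mul_of_nonneg_left step3 hCpos.le
    rw [Real.norm_eq_abs, Real.norm_eq_abs, abs_of_nonneg (by positivity),
      abs_of_nonneg (by positivity)]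
    exact hfin


lemma summable_ml {α β : ℝ} (hα : 0 < α) (hβ : 0 < β) (z : ℝ) :
    Summable (fun k : ℕ => z^k / Real.Gamma (α*k+β)) := by
  apply Summable.of_norm
  refine Summable.of_nonneg_of_le (fun k => norm_nonneg _) ?_
    (summable_key hα hβ (abs_nonneg z))
  · intro k
    have hΓ : 0 < Real.Gamma (α*k+β) := Real.Gamma_pos_of_pos (by positivity)
    rw [Real.norm_eq_abs, abs_div, abs_of_pos hΓ, abs_pow]
    apply div_le_div_of_nonneg_right _ hΓ.le
    nlinarith [abs_nonneg z, pow_nonneg (abs_nonneg z) k, Nat.cast_nonneg (α := ℝ) k]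

lemma ml_eq {α β : ℝ} (c : ℝ) {u : ℝ} (hu : 0 ≤ u) :
    mittagLeffler α β (c * u ^ α) = ∑' k : ℕ, c^k * u ^ (α*(k:ℝ)) / Real.Gamma (α*k+β) := by
  unfold mittagLeffler
  apply tsum_congr; intro k
  rw [mul_pow, ← Real.rpow_natCast (u^α) k, ← Real.rpow_mul hu]

lemma ml_zero {α : ℝ} (hα : 0 < α) (c : ℝ) : mittagLeffler α 1 (c * (0:ℝ) ^ α) = 1 := by
  rw [Real.zero_rpow hα.ne', mul_zero]
  unfold mittagLeffler
  rw [tsum_eq_single 0 (fun b hb => by simp [zero_pow hb])]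
  simp [Real.Gamma_one]

lemma ml_comp_continuousOn {α β : ℝ} (hα : 0 < α) (hβ : 0 < β) (c M : ℝ) :
    ContinuousOn (fun u : ℝ => mittagLeffler α β (c * u ^ α)) (Icc 0 M) := by
  set M₁ : ℝ := max 1 M with hM₁
  have hM₁1 : (1:ℝ) ≤ M₁ := le_max_left _ _
  have hM₁0 : (0:ℝ) < M₁ := by linarith
  set R : ℝ := |c| * M₁ ^ α with hR
  have hRnn : 0 ≤ R := by positivity
  apply ContinuousOn.congr (f := fun u : ℝ => ∑' k : ℕ, c^k * u ^ (α*(k:ℝ)) / Real.Gamma (α*k+β))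
  · apply continuousOn_tsum (u := fun k : ℕ => ((k:ℝ)+1) * R^k / Real.Gamma (α*k+β))
    · intro k
      apply ContinuousOn.div_const
      apply ContinuousOn.mul continuousOn_const
      apply Continuous.continuousOn
      apply continuous_iff_continuousAt.2
      intro x
      exact Real.continuousAt_rpow_const x _ (Or.inr (by positivity))
    · exact summable_key hα hβ hRnn
    · intro k u hu
      have hΓ : 0 < Real.Gamma (α*k+β) := Real.Gamma_pos_of_pos (by positivity)
      have h1 : u ^ (α*(k:ℝ)) ≤ M₁ ^ (α*(k:ℝ)) :=
        Real.rpow_le_rpow hu.1 (le_trans hu.2 (le_max_right 1 M)) (by positivity)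
      have h2 : M₁ ^ (α*(k:ℝ)) = (M₁^α)^k := by
        rw [← Real.rpow_natCast (M₁^α) k, ← Real.rpow_mul hM₁0.le]
      rw [Real.norm_eq_abs, abs_div, abs_of_pos hΓ, abs_mul, abs_pow,
        abs_of_nonneg (Real.rpow_nonneg hu.1 _)]
      apply div_le_div_of_nonneg_right _ hΓ.le
      calc |c|^k * u ^ (α*(k:ℝ)) ≤ |c|^k * (M₁^α)^k := by
            apply mul_le_mul_of_nonneg_left _ (by positivity)
            rw [← h2]; exact h1
        _ = R^k := by rw [hR, mul_pow]
        _ ≤ ((k:ℝ)+1) * R^k := by nlinarith [pow_nonneg hRnn k, Nat.cast_nonneg (α := ℝ) k]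
  · intro u hu
    exact ml_eq c hu.1


lemma ml_hasDerivAt {α : ℝ} (hα : 0 < α) (c : ℝ) {u : ℝ} (hu : 0 < u) :
    HasDerivAt (fun v : ℝ => mittagLeffler α 1 (c * v ^ α))
      (c * u ^ (α-1) * mittagLeffler α α (c * u ^ α)) u := by
  set s : Set ℝ := Ioo (u/2) (u+1) with hs
  have hus : u ∈ s := ⟨by linarith, by linarith⟩
  set R : ℝ := |c| * (u+1) ^ α with hR
  have hRnn : 0 ≤ R := by positivity
  set g : ℕ → ℝ → ℝ := fun k y => c^k / Real.Gamma (α*k+1) * y ^ (α*(k:ℝ)) with hg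
  set g' : ℕ → ℝ → ℝ := fun k y => c^k / Real.Gamma (α*k+1) * (α*(k:ℝ) * y ^ (α*(k:ℝ) - 1))
    with hg'
  set b : ℕ → ℝ := fun k => (2/u) * α * (((k:ℝ)+1) * R^k / Real.Gamma (α*k+1)) with hb
  have hbs : Summable b := (summable_key hα one_pos hRnn).mul_left _
  have hder : ∀ (k : ℕ) (y : ℝ), y ∈ s → HasDerivAt (g k) (g' k y) y := by
    intro k y hy
    have hy0 : y ≠ 0 := by have := hy.1; intro h; rw [h] at this; linarith
    exact (Real.hasDerivAt_rpow_const (Or.inl hy0)).const_mul _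
  have hbnd : ∀ (k : ℕ) (y : ℝ), y ∈ s → ‖g' k y‖ ≤ b k := by
    intro k y hy
    have hy0 : 0 < y := by have := hy.1; linarith
    have hΓ : 0 < Real.Gamma (α*k+1) := Real.Gamma_pos_of_pos (by positivity)
    have e1 : y ^ (α*(k:ℝ) - 1) = y ^ (α*(k:ℝ)) / y := by
      rw [Real.rpow_sub hy0, Real.rpow_one]
    have h1 : y ^ (α*(k:ℝ)) ≤ ((u+1)^α)^k := by
      rw [← Real.rpow_natCast ((u+1)^α) k, ← Real.rpow_mul (by linarith)]
      exact Real.rpow_le_rpow hy0.le (le_of_lt hy.2) (by positivity)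
    have h2 : (1:ℝ)/y ≤ 2/u := by
      rw [div_le_div_iff₀ hy0 hu]
      linarith [hy.1, hu]
    rw [Real.norm_eq_abs, abs_mul, abs_div, abs_pow, abs_of_pos hΓ, abs_mul,
      abs_of_nonneg (by positivity : (0:ℝ) ≤ α*(k:ℝ)),
      abs_of_nonneg (Real.rpow_nonneg hy0.le _)]
    rw [e1, hb]
    have hyk : 0 ≤ y ^ (α*(k:ℝ)) := Real.rpow_nonneg hy0.le _
    have hRk : |c|^k * ((u+1)^α)^k = R^k := by rw [hR, mul_pow]
    calc |c|^k / Real.Gamma (α*k+1) * (α*(k:ℝ) * (y ^ (α*(k:ℝ)) / y))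
        ≤ |c|^k / Real.Gamma (α*k+1) * (α*((k:ℝ)+1) * (((u+1)^α)^k * (2/u))) := by
          apply mul_le_mul_of_nonneg_left _ (by positivity)
          have : y ^ (α*(k:ℝ)) / y ≤ ((u+1)^α)^k * (2/u) := by
            rw [div_eq_mul_one_div]
            apply mul_le_mul h1 h2 (by positivity) (by positivity)
          apply mul_le_mul (by nlinarith [Nat.cast_nonneg (α := ℝ) k]) this
            (by positivity) (by positivity)
      _ = (2/u) * α * (((k:ℝ)+1) * R^k / Real.Gamma (α*k+1)) := by
          rw [← hRk]; field_simp
  have hg0 : Summable (fun k => g k u) := by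
    have : (fun k => g k u) = fun k : ℕ => (c*u^α)^k / Real.Gamma (α*k+1) := by
      funext k
      rw [hg, mul_pow, ← Real.rpow_natCast (u^α) k, ← Real.rpow_mul hu.le]
      ring
    rw [this]
    exact summable_ml hα one_pos _
  have H : HasDerivAt (fun z => ∑' k, g k z) (∑' k, g' k u) u :=
    hasDerivAt_tsum_of_isPreconnected hbs isOpen_Ioo (isPreconnected_Ioo)
      hder hbnd hus hg0 hus
  have heq : (fun v : ℝ => mittagLeffler α 1 (c * v ^ α)) =ᶠ[nhds u] (fun z => ∑' k, g k z) := by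
    filter_upwards [isOpen_Ioo.mem_nhds hus] with y hy
    rw [ml_eq c (by have := hy.1; linarith : (0:ℝ) ≤ y)]
    apply tsum_congr; intro k; rw [hg]; ring
  have hsg' : Summable (fun k => g' k u) :=
    Summable.of_norm_bounded hbs (fun k => hbnd k u hus)
  have hval : (∑' k, g' k u) = c * u ^ (α-1) * mittagLeffler α α (c * u ^ α) := by
    rw [hsg'.tsum_eq_zero_add]
    have h0 : g' 0 u = 0 := by simp [hg']
    rw [h0, zero_add]
    have hterm : ∀ j : ℕ, g' (j+1) u =
        (c * u ^ (α-1)) * ((c*u^α)^j / Real.Gamma (α*j+α)) := by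
      intro j
      have hαj : α*((j:ℕ)+1:ℝ) ≠ 0 := by positivity
      have hΓj : 0 < Real.Gamma (α*j+α) := Real.Gamma_pos_of_pos (by positivity)
      have hΓe : Real.Gamma (α*((j:ℝ)+1)+1) = (α*((j:ℝ)+1)) * Real.Gamma (α*j+α) := by
        rw [show α*((j:ℝ)+1) = α*(j:ℝ)+α by ring] at hαj ⊢
        exact Real.Gamma_add_one hαj
      have hu1 : u ^ (α*((j:ℝ)+1) - 1) = u^(α*(j:ℝ)) * u^(α-1) := by
        rw [← Real.rpow_add hu]; congr 1; ring
      have hcu : (c*u^α)^j = c^j * u^(α*(j:ℝ)) := by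
        rw [mul_pow, ← Real.rpow_natCast (u^α) j, ← Real.rpow_mul hu.le]
      rw [hg']
      push_cast
      rw [hΓe, hu1, hcu]
      have h1 : (0:ℝ) < α*((j:ℝ)+1) := by positivity
      field_simp
      ring
    rw [tsum_congr hterm, tsum_mul_left, ml_eq c hu.le]
    congr 1
    apply tsum_congr; intro k
    rw [mul_pow, ← Real.rpow_natCast (u^α) k, ← Real.rpow_mul hu.le]
  rw [← hval]
  exact H.congr_of_eventuallyEq heq


/-- Alternative representation of the Atangana–Baleanu fractional derivative,
obtained by integration by parts. -/
theorem abDeriv_eq (α T : ℝ) (hα0 : 0 < α) (hα1 : α < 1) (hT : 0 < T)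
    (f : ℝ → ℝ) (hf : ContDiffOn ℝ 1 f (Icc 0 T)) :
    ∀ t ∈ Ioc 0 T,
      abDeriv α f t =
        (1 / (1 - α)) * (f t - mittagLeffler α 1 (-α * t ^ α / (1 - α)) * f 0)
        - (α / (1 - α) ^ 2) * ∫ τ in (0:ℝ)..t,
            f τ * (t - τ) ^ (α - 1) *
              mittagLeffler α α (-α * (t - τ) ^ α / (1 - α)) := by
  intro t ht
  obtain ⟨ht0, htT⟩ := ht
  have h1α : (0:ℝ) < 1 - α := by linarith
  set c : ℝ := -α / (1-α) with hc
  have harg : ∀ x : ℝ, -α * x / (1-α) = c * x := by intro x; rw [hc]; ring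
  set G1 : ℝ → ℝ := fun u => mittagLeffler α 1 (c * u ^ α) with hG1
  set G2 : ℝ → ℝ := fun u => mittagLeffler α α (c * u ^ α) with hG2
  set F : ℝ → ℝ := fun s => f s * G1 (t - s) with hF
  set F1 : ℝ → ℝ := fun s => deriv f s * G1 (t - s) with hF1
  set F2 : ℝ → ℝ := fun s => (t-s) ^ (α-1) * (f s * G2 (t-s)) with hF2
  set F' : ℝ → ℝ := fun s => F1 s + (α/(1-α)) * F2 s with hF'
  have hsubT : Icc (0:ℝ) t ⊆ Icc 0 T := Icc_subset_Icc le_rfl htT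
  have hmaps : MapsTo (fun s : ℝ => t - s) (Icc 0 t) (Icc 0 t) := by
    intro s hs
    simp only [mem_Icc] at hs ⊢
    constructor <;> linarith [hs.1, hs.2]
  have hcont_sub : ContinuousOn (fun s : ℝ => t - s) (Icc 0 t) :=
    (continuous_const.sub continuous_id).continuousOn
  have contG1comp : ContinuousOn (fun s : ℝ => G1 (t - s)) (Icc 0 t) :=
    (ml_comp_continuousOn hα0 one_pos c t).comp hcont_sub hmaps
  have contG2comp : ContinuousOn (fun s : ℝ => G2 (t - s)) (Icc 0 t) :=
    (ml_comp_continuousOn hα0 hα0 c t).comp hcont_sub hmaps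
  have contF : ContinuousOn F (Icc 0 t) :=
    ((hf.continuousOn).mono hsubT).mul contG1comp
  -- derivative
  have hderivF : ∀ s ∈ Ioo 0 t, HasDerivAt F (F' s) s := by
    intro s hs
    have hsT : s ∈ Ioo 0 T := ⟨hs.1, lt_of_lt_of_le hs.2 htT⟩
    have hfd : HasDerivAt f (deriv f s) s := by
      have h1 : DifferentiableWithinAt ℝ f (Icc 0 T) s :=
        (hf.differentiableOn one_ne_zero) s ⟨hsT.1.le, hsT.2.le⟩
      exact (h1.differentiableAt (Icc_mem_nhds hsT.1 hsT.2)).hasDerivAt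
    have hu : 0 < t - s := by linarith [hs.2]
    have hinner : HasDerivAt (fun s' : ℝ => t - s') (-1) s := (hasDerivAt_id s).const_sub t
    have hG1d : HasDerivAt (fun s' : ℝ => G1 (t - s'))
        ((c * (t-s)^(α-1) * G2 (t-s)) * (-1)) s :=
      HasDerivAt.comp s (ml_hasDerivAt hα0 c hu) hinner
    have hmul := hfd.mul hG1d
    have : F' s = deriv f s * G1 (t-s) + f s * ((c * (t-s)^(α-1) * G2 (t-s)) * (-1)) := by
      simp only [hF', hF1, hF2, hG1, hG2, hc]
      field_simp
    rw [this]
    exact hmul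
  -- integrability of F1
  have hint1 : IntervalIntegrable F1 volume 0 t := by
    have hdwc : ContinuousOn (fun s => derivWithin f (Icc 0 T) s * G1 (t-s)) (Icc 0 t) :=
      (((hf.continuousOn_derivWithin (uniqueDiffOn_Icc hT) le_rfl).mono hsubT)).mul contG1comp
    have hii : IntervalIntegrable (fun s => derivWithin f (Icc 0 T) s * G1 (t-s)) volume 0 t := by
      apply ContinuousOn.intervalIntegrable
      rwa [uIcc_of_le ht0.le]
    rw [intervalIntegrable_iff_integrableOn_Ioc_of_le ht0.le] at hii ⊢
    apply hii.congr
    rw [← Measure.restrict_congr_set (Ioo_ae_eq_Ioc (a := (0:ℝ)) (b := t))]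
    filter_upwards [ae_restrict_mem measurableSet_Ioo] with s hs
    rw [hF1]
    have hsT : s ∈ Ioo 0 T := ⟨hs.1, lt_of_lt_of_le hs.2 htT⟩
    rw [derivWithin_of_mem_nhds (Icc_mem_nhds hsT.1 hsT.2)]
  -- integrability of F2
  have hint2 : IntervalIntegrable F2 volume 0 t := by
    have hr : IntervalIntegrable (fun s : ℝ => (t - s) ^ (α-1)) volume 0 t := by
      have h0 : IntervalIntegrable (fun x : ℝ => x ^ (α-1)) volume 0 t :=
        intervalIntegral.intervalIntegrable_rpow' (by linarith)
      have h1 := h0.comp_sub_left t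
      simpa using h1.symm
    have hcont2 : ContinuousOn (fun s => f s * G2 (t-s)) (uIcc 0 t) := by
      rw [uIcc_of_le ht0.le]
      exact ((hf.continuousOn).mono hsubT).mul contG2comp
    exact hr.mul_continuousOn hcont2
  have hintF' : IntervalIntegrable F' volume 0 t := hint1.add (hint2.const_mul _)
  -- FTC
  have hFTC : ∫ s in (0:ℝ)..t, F' s = F t - F 0 :=
    intervalIntegral.integral_eq_sub_of_hasDeriv_right_of_le ht0.le contF
      (fun s hs => (hderivF s hs).hasDerivWithinAt) hintF'
  have hFt : F t = f t := by
    simp only [hF, hG1, sub_self]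
    rw [ml_zero hα0 c, mul_one]
  have hF0 : F 0 = f 0 * G1 t := by simp only [hF, sub_zero]
  have hsplit : ∫ s in (0:ℝ)..t, F' s =
      (∫ s in (0:ℝ)..t, F1 s) + (α/(1-α)) * ∫ s in (0:ℝ)..t, F2 s := by
    rw [hF']
    rw [intervalIntegral.integral_add hint1 (hint2.const_mul _),
      intervalIntegral.integral_const_mul]
  -- identify abDeriv integrand with F1
  have habd : abDeriv α f t = (1/(1-α)) * ∫ s in (0:ℝ)..t, F1 s := by
    unfold abDeriv
    congr 1
    apply intervalIntegral.integral_congr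
    intro s _
    simp only [hF1, hG1, harg]
  have hJ : (∫ τ in (0:ℝ)..t, f τ * (t - τ) ^ (α - 1) *
      mittagLeffler α α (-α * (t - τ) ^ α / (1 - α))) = ∫ s in (0:ℝ)..t, F2 s := by
    apply intervalIntegral.integral_congr
    intro s _
    simp only [hF2, hG2, harg]
    ring
  have hG1t : mittagLeffler α 1 (-α * t ^ α / (1 - α)) = G1 t := by simp only [hG1, harg]
  rw [habd, hG1t, hJ]
  have h1 : (∫ s in (0:ℝ)..t, F1 s) =
      (f t - f 0 * G1 t) - (α/(1-α)) * ∫ s in (0:ℝ)..t, F2 s := by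
    have := hsplit
    rw [hFTC, hFt, hF0] at this
    linarith
  rw [h1]
  field_simp
end

section
/- Let f : ℝ → ℝ be continuously differentiable on [0,T] and let t ∈ (0,T]. Then the Atangana–Baleanu fractional derivative of order α of f at t tends to f(t) − f(0) as α → 0⁺; that is, lim_{α → 0⁺} D_*^α f(t) = f(t) − f(0). -/
open Set Filter

lemma Gamma_two_aux : Real.Gamma 2 = 1 := by
  rw [show (2:ℝ) = 1 + 1 by norm_num, Real.Gamma_add_one one_ne_zero, Real.Gamma_one]
  norm_num

lemma one_le_Gamma_aux {x : ℝ} (hx : 2 ≤ x) : 1 ≤ Real.Gamma x := by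
  rcases eq_or_lt_of_le hx with h | h
  · rw [← h, Gamma_two_aux]
  · have hx1' : (0:ℝ) < x - 1 := by linarith
    have ha : (0:ℝ) ≤ (x - 2)/(x - 1) := div_nonneg (by linarith) (by linarith)
    have hb : (0:ℝ) ≤ 1/(x - 1) := by positivity
    have hab : (x - 2)/(x - 1) + 1/(x - 1) = 1 := by field_simp; ring
    have hc := Real.convexOn_Gamma.2 (mem_Ioi.mpr one_pos)
      (mem_Ioi.mpr (by linarith : (0:ℝ) < x)) ha hb hab
    have hcomb : ((x - 2)/(x - 1)) • (1:ℝ) + (1/(x - 1)) • x = 2 := by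
      simp only [smul_eq_mul]
      field_simp
      ring
    rw [hcomb, Gamma_two_aux, Real.Gamma_one, smul_eq_mul, smul_eq_mul, mul_one] at hc
    have key := mul_le_mul_of_nonneg_right hc (le_of_lt hx1')
    have h1 : (x - 2)/(x - 1) * (x - 1) = x - 2 := by field_simp
    have h2 : (1/(x - 1) * Real.Gamma x) * (x - 1) = Real.Gamma x := by field_simp
    nlinarith [key]

lemma half_le_Gamma_aux {x : ℝ} (hx : 1 ≤ x) : (1:ℝ)/2 ≤ Real.Gamma x := by
  rcases le_or_gt 2 x with h | h
  · linarith [one_le_Gamma_aux h]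
  · have hx0 : (0:ℝ) < x := by linarith
    have h1 : Real.Gamma (x + 1) = x * Real.Gamma x := Real.Gamma_add_one (ne_of_gt hx0)
    have h2 : (1:ℝ) ≤ Real.Gamma (x + 1) := one_le_Gamma_aux (by linarith)
    nlinarith [Real.Gamma_pos_of_pos hx0]

lemma ml_term_bound {α z : ℝ} (hα : 0 < α) (k : ℕ) :
    ‖z ^ k / Real.Gamma (α * k + 1)‖ ≤ 2 * |z| ^ k := by
  have h1 : (1:ℝ) ≤ α * k + 1 := by
    nlinarith [mul_nonneg hα.le (Nat.cast_nonneg k : (0:ℝ) ≤ (k:ℝ))]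
  have hΓ : (1:ℝ)/2 ≤ Real.Gamma (α * k + 1) := half_le_Gamma_aux h1
  have hΓ0 : (0:ℝ) < Real.Gamma (α * k + 1) := by linarith
  rw [Real.norm_eq_abs, abs_div, abs_pow, abs_of_pos hΓ0]
  rw [div_le_iff₀ hΓ0]
  nlinarith [pow_nonneg (abs_nonneg z) k]

lemma ml_summable {α z : ℝ} (hα : 0 < α) (hz : |z| ≤ 1/2) :
    Summable (fun k : ℕ => z ^ k / Real.Gamma (α * k + 1)) := by
  apply Summable.of_norm_bounded (g := fun k : ℕ => 2 * |z| ^ k)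
  · exact (summable_geometric_of_lt_one (abs_nonneg z) (by linarith)).mul_left 2
  · exact ml_term_bound hα

lemma ml_term_bound' {α z : ℝ} (hα : 0 < α) (k : ℕ) :
    ‖z ^ (k+1) / Real.Gamma (α * ((k+1 : ℕ) : ℝ) + 1)‖ ≤ 2 * |z| * |z| ^ k := by
  have h := ml_term_bound hα (k+1) (z := z)
  rw [pow_succ] at h
  calc ‖z ^ (k+1) / Real.Gamma (α * ((k+1 : ℕ) : ℝ) + 1)‖ ≤ 2 * (|z| ^ k * |z|) := h
    _ = 2 * |z| * |z| ^ k := by ring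

lemma ml_sub_one_bound {α z : ℝ} (hα : 0 < α) (hz : |z| ≤ 1/2) :
    |mittagLeffler α 1 z - 1| ≤ 4 * |z| := by
  have hs := ml_summable hα hz
  rw [mittagLeffler, hs.tsum_eq_zero_add]
  have h0 : z ^ 0 / Real.Gamma (α * ((0:ℕ):ℝ) + 1) = 1 := by
    simp [Real.Gamma_one]
  rw [h0, add_sub_cancel_left]
  have hzlt : |z| < 1 := by linarith
  have hgs : Summable (fun k : ℕ => 2 * |z| * |z| ^ k) :=
    (summable_geometric_of_lt_one (abs_nonneg z) hzlt).mul_left (2 * |z|)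
  have hsn : Summable (fun k : ℕ => ‖z ^ (k+1) / Real.Gamma (α * ((k+1 : ℕ) : ℝ) + 1)‖) :=
    Summable.of_nonneg_of_le (fun k => norm_nonneg _) (ml_term_bound' hα) hgs
  calc |∑' k : ℕ, z ^ (k+1) / Real.Gamma (α * ((k+1 : ℕ) : ℝ) + 1)|
      ≤ ∑' k : ℕ, ‖z ^ (k+1) / Real.Gamma (α * ((k+1 : ℕ) : ℝ) + 1)‖ := by
        simpa [Real.norm_eq_abs] using norm_tsum_le_tsum_norm hsn
    _ ≤ ∑' k : ℕ, 2 * |z| * |z| ^ k := hsn.tsum_le_tsum (ml_term_bound' hα) hgs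
    _ = 2 * |z| * (1 - |z|)⁻¹ := by
        rw [tsum_mul_left, tsum_geometric_of_lt_one (abs_nonneg z) hzlt]
    _ ≤ 4 * |z| := by
        have h1 : (0:ℝ) < 1 - |z| := by linarith
        rw [mul_inv_le_iff₀ h1]
        nlinarith [abs_nonneg z]

open MeasureTheory in
/-- As `α → 0⁺`, the Atangana–Baleanu fractional derivative of order `α` of `f`
at `t` tends to `f t - f 0`. -/
theorem abDeriv_tendsto_of_alpha_to_zero (T : ℝ) (hT : 0 < T)
    (f : ℝ → ℝ) (hf : ContDiffOn ℝ 1 f (Icc 0 T)) (t : ℝ) (ht : t ∈ Ioc 0 T) :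
    Tendsto (fun α => abDeriv α f t) (nhdsWithin 0 (Ioi 0))
      (nhds (f t - f 0)) := by
  obtain ⟨ht0, htT⟩ := ht
  have hTt : Icc (0:ℝ) t ⊆ Icc 0 T := Icc_subset_Icc le_rfl htT
  set g := derivWithin f (Icc 0 T) with hgdef
  have hgc : ContinuousOn g (Icc 0 T) :=
    hf.continuousOn_derivWithin (uniqueDiffOn_Icc hT) le_rfl
  obtain ⟨M, hM⟩ := isCompact_Icc.exists_bound_of_continuousOn hgc
  have hM0 : 0 ≤ M := (norm_nonneg _).trans (hM 0 ⟨le_refl 0, hT.le⟩)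
  have hdiff : ∀ s ∈ Ioo 0 T, DifferentiableAt ℝ f s := by
    intro s hs
    exact ((hf.differentiableOn one_ne_zero) s (Ioo_subset_Icc_self hs)).differentiableAt
      (Icc_mem_nhds hs.1 hs.2)
  have hderiv_eq : ∀ s ∈ Ioo 0 T, deriv f s = g s := fun s hs =>
    (derivWithin_of_mem_nhds (Icc_mem_nhds hs.1 hs.2)).symm
  have hae_ne : ∀ᵐ s : ℝ, s ≠ t := by
    refine ae_iff.mpr ?_
    have h : {a : ℝ | ¬a ≠ t} = {t} := by ext x; simp
    rw [h]
    exact measure_singleton t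
  have hioo : ∀ᵐ s ∂(volume.restrict (Ioc 0 t)), s ∈ Ioo 0 t := by
    filter_upwards [ae_restrict_mem measurableSet_Ioc, ae_restrict_of_ae hae_ne] with s hs hsne
    exact ⟨hs.1, lt_of_le_of_ne hs.2 hsne⟩
  have hiooT : ∀ᵐ s ∂(volume.restrict (Ioc 0 t)), s ∈ Ioo 0 T :=
    hioo.mono (fun s hs => ⟨hs.1, lt_of_lt_of_le hs.2 htT⟩)
  have hgInt : IntegrableOn g (Ioc 0 t) :=
    ((hgc.mono hTt).integrableOn_Icc).mono_set Ioc_subset_Icc_self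
  have hderiv_ae : deriv f =ᵐ[volume.restrict (Ioc 0 t)] g :=
    hiooT.mono (fun s hs => hderiv_eq s hs)
  have hIntDeriv : IntervalIntegrable (deriv f) volume 0 t := by
    rw [intervalIntegrable_iff, uIoc_of_le ht0.le]
    exact hgInt.congr hderiv_ae.symm
  have hFTC : (∫ s in (0:ℝ)..t, deriv f s) = f t - f 0 := by
    apply intervalIntegral.integral_eq_sub_of_hasDerivAt_of_le ht0.le
      (hf.continuousOn.mono hTt)
      (fun x hx => (hdiff x ⟨hx.1, lt_of_lt_of_le hx.2 htT⟩).hasDerivAt) hIntDeriv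
  set K := max 1 t with hKdef
  have hK1 : (1:ℝ) ≤ K := le_max_left 1 t
  have htK : t ≤ K := le_max_right 1 t
  have hK0 : (0:ℝ) < K := lt_of_lt_of_le one_pos hK1
  set C := 16*M*K*t + 2*|f t - f 0| with hCdef
  set δ := min (1/2 : ℝ) (1/(4*K)) with hδdef
  have hδ0 : 0 < δ := lt_min (by norm_num) (by positivity)
  have key : ∀ᶠ α in nhdsWithin 0 (Ioi 0), ‖abDeriv α f t - (f t - f 0)‖ ≤ C * α := by
    filter_upwards [Ioo_mem_nhdsGT hδ0]
      with α hα
    obtain ⟨hα0, hαδ⟩ := hα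
    have hα2 : α ≤ 1/2 := le_of_lt (lt_of_lt_of_le hαδ (min_le_left _ _))
    have hα4 : α ≤ 1/(4*K) := le_of_lt (lt_of_lt_of_le hαδ (min_le_right _ _))
    have h1α : (0:ℝ) < 1 - α := by linarith
    have hinv : 1/(1-α) ≤ 2 := by rw [div_le_iff₀ h1α]; linarith
    set z : ℝ → ℝ := fun s => -α * (t - s) ^ α / (1 - α) with hzdef
    have hzb : ∀ s ∈ Icc 0 t, |z s| ≤ 2*K*α := by
      intro s hs
      have hts0 : 0 ≤ t - s := by linarith [hs.2]
      have hrp : (t - s) ^ α ≤ K := by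
        calc (t-s) ^ α ≤ K ^ α :=
              Real.rpow_le_rpow hts0 (by linarith [hs.1, htK]) hα0.le
          _ ≤ K ^ (1:ℝ) := Real.rpow_le_rpow_of_exponent_le hK1 (by linarith)
          _ = K := Real.rpow_one K
      have hrp0 : 0 ≤ (t - s) ^ α := Real.rpow_nonneg hts0 α
      have habs : |z s| = α * (t - s) ^ α / (1 - α) := by
        rw [hzdef]
        simp only []
        rw [abs_div, abs_of_pos h1α, abs_mul, abs_neg, abs_of_pos hα0, abs_of_nonneg hrp0]
      rw [habs, div_le_iff₀ h1α]
      nlinarith [mul_le_mul_of_nonneg_left hrp hα0.le,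
        mul_nonneg (mul_nonneg hα0.le hK0.le) (by linarith : (0:ℝ) ≤ 1 - 2*α)]
    have h2Kα : 2*K*α ≤ 1/2 := by
      calc 2*K*α ≤ 2*K*(1/(4*K)) := by
            apply mul_le_mul_of_nonneg_left hα4 (by positivity)
        _ = 1/2 := by field_simp; ring
    have hzhalf : ∀ s ∈ Icc 0 t, |z s| ≤ 1/2 := fun s hs => (hzb s hs).trans h2Kα
    have hml1 : ∀ s ∈ Icc 0 t, |mittagLeffler α 1 (z s) - 1| ≤ 8*K*α := by
      intro s hs
      have h := ml_sub_one_bound hα0 (hzhalf s hs)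
      have h2 := hzb s hs
      nlinarith [abs_nonneg (z s)]
    have hml3 : ∀ s ∈ Icc 0 t, |mittagLeffler α 1 (z s)| ≤ 3 := by
      intro s hs
      have h := hml1 s hs
      have h8 : 8*K*α ≤ 2 := by linarith [h2Kα]
      calc |mittagLeffler α 1 (z s)| ≤ |mittagLeffler α 1 (z s) - 1| + 1 := by
            have := abs_add_le (mittagLeffler α 1 (z s) - 1) 1
            simpa using this
        _ ≤ 3 := by linarith
    have hzm : Measurable z := by
      apply Measurable.div_const
      apply Measurable.const_mul
      exact (Real.continuous_rpow_const hα0.le).measurable.comp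
        (measurable_const.sub measurable_id)
    set F : ℝ → ℝ := fun s => deriv f s * mittagLeffler α 1 (z s) with hFdef
    have hMLm : AEStronglyMeasurable (fun s => mittagLeffler α 1 (z s))
        (volume.restrict (Ioc 0 t)) := by
      apply aestronglyMeasurable_of_tendsto_ae atTop
        (f := fun (n : ℕ) (s : ℝ) => ∑ k ∈ Finset.range n, (z s) ^ k / Real.Gamma (α * k + 1))
      · intro n
        apply Measurable.aestronglyMeasurable
        apply Finset.measurable_sum
        intro k _
        exact (hzm.pow_const k).div_const _
      · filter_upwards [ae_restrict_mem measurableSet_Ioc] with s hs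
        have hsum := ml_summable hα0 (hzhalf s (Ioc_subset_Icc_self hs))
        simpa [mittagLeffler] using hsum.hasSum.tendsto_sum_nat
    have hFm : AEStronglyMeasurable F (volume.restrict (Ioc 0 t)) :=
      ((measurable_deriv f).aestronglyMeasurable).mul hMLm
    have hFInt : IntegrableOn F (Ioc 0 t) := by
      apply Integrable.mono' (integrable_const (M * 3)) hFm
      filter_upwards [hioo] with s hs
      have hsT : s ∈ Ioo 0 T := ⟨hs.1, lt_of_lt_of_le hs.2 htT⟩
      have hsIcc : s ∈ Icc 0 t := ⟨hs.1.le, hs.2.le⟩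
      have h1 : |g s| ≤ M := by
        simpa [Real.norm_eq_abs] using hM s (hTt hsIcc)
      have h2 := hml3 s hsIcc
      calc ‖F s‖ = |deriv f s| * |mittagLeffler α 1 (z s)| := by
            rw [hFdef]; simp [Real.norm_eq_abs, abs_mul]
        _ = |g s| * |mittagLeffler α 1 (z s)| := by rw [hderiv_eq s hsT]
        _ ≤ M * 3 := mul_le_mul h1 h2 (abs_nonneg _) hM0
    have hIntF : IntervalIntegrable F volume 0 t := by
      rw [intervalIntegrable_iff, uIoc_of_le ht0.le]
      exact hFInt
    have hsub : ‖(∫ s in (0:ℝ)..t, F s) - ∫ s in (0:ℝ)..t, deriv f s‖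
        ≤ M * (8*K*α) * |t - 0| := by
      rw [← intervalIntegral.integral_sub hIntF hIntDeriv]
      apply intervalIntegral.norm_integral_le_of_norm_le_const_ae
      filter_upwards [hae_ne] with s hsne hsmem
      rw [uIoc_of_le ht0.le] at hsmem
      have hsIoo : s ∈ Ioo 0 t := ⟨hsmem.1, lt_of_le_of_ne hsmem.2 hsne⟩
      have hsT : s ∈ Ioo 0 T := ⟨hsIoo.1, lt_of_lt_of_le hsIoo.2 htT⟩
      have hsIcc : s ∈ Icc 0 t := ⟨hsIoo.1.le, hsIoo.2.le⟩
      have hdiffeq : F s - deriv f s = deriv f s * (mittagLeffler α 1 (z s) - 1) := by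
        rw [hFdef]; ring
      rw [hdiffeq, Real.norm_eq_abs, abs_mul, hderiv_eq s hsT]
      have h1 : |g s| ≤ M := by
        simpa [Real.norm_eq_abs] using hM s (hTt hsIcc)
      exact mul_le_mul h1 (hml1 s hsIcc) (abs_nonneg _) hM0
    have habd : abDeriv α f t = (1/(1-α)) * ∫ s in (0:ℝ)..t, F s := by
      simp only [abDeriv, hFdef, hzdef]
    have hsub' : ‖(∫ s in (0:ℝ)..t, F s) - (f t - f 0)‖ ≤ M * (8*K*α) * t := by
      rw [← hFTC]
      calc ‖(∫ s in (0:ℝ)..t, F s) - ∫ s in (0:ℝ)..t, deriv f s‖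
          ≤ M * (8*K*α) * |t - 0| := hsub
        _ = M * (8*K*α) * t := by rw [sub_zero, abs_of_pos ht0]
    have hId : abDeriv α f t - (f t - f 0) =
        (1/(1-α)) * ((∫ s in (0:ℝ)..t, F s) - (f t - f 0)) + (α/(1-α)) * (f t - f 0) := by
      rw [habd]
      field_simp
      ring
    rw [hId]
    have hαdiv : α/(1-α) ≤ 2*α := by
      rw [div_le_iff₀ h1α]
      nlinarith
    calc ‖(1/(1-α)) * ((∫ s in (0:ℝ)..t, F s) - (f t - f 0)) + (α/(1-α)) * (f t - f 0)‖
        ≤ ‖(1/(1-α)) * ((∫ s in (0:ℝ)..t, F s) - (f t - f 0))‖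
          + ‖(α/(1-α)) * (f t - f 0)‖ := norm_add_le _ _
      _ = (1/(1-α)) * ‖(∫ s in (0:ℝ)..t, F s) - (f t - f 0)‖
          + (α/(1-α)) * |f t - f 0| := by
          rw [norm_mul, norm_mul, Real.norm_eq_abs (1/(1-α)), abs_of_pos (by positivity),
            Real.norm_eq_abs (α/(1-α)), abs_of_pos (by positivity), Real.norm_eq_abs (f t - f 0)]
      _ ≤ 2 * (M * (8*K*α) * t) + (2*α) * |f t - f 0| := by
          apply add_le_add
          · apply mul_le_mul hinv hsub' (norm_nonneg _) (by norm_num)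
          · exact mul_le_mul_of_nonneg_right hαdiv (abs_nonneg _)
      _ = C * α := by rw [hCdef]; ring
  have h2 : Tendsto (fun α : ℝ => C * α) (nhdsWithin 0 (Ioi 0)) (nhds 0) := by
    have h : Continuous (fun α : ℝ => C * α) := continuous_const.mul continuous_id
    have h' : Tendsto (fun α : ℝ => C * α) (nhdsWithin 0 (Ioi 0)) (nhds (C * 0)) :=
      (h.tendsto (0:ℝ)).mono_left nhdsWithin_le_nhds
    simpa using h'
  have h3 : Tendsto (fun α => abDeriv α f t - (f t - f 0)) (nhdsWithin 0 (Ioi 0)) (nhds 0) :=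
    squeeze_zero_norm' key h2
  have h4 := h3.add_const (f t - f 0)
  simpa using h4
end

section
/- Let 0 < α < 1 and let f : ℝ → ℝ be continuously differentiable on [0,T]. If f attains its maximum over [0,T] at a point t₀ ∈ (0,T), then the Riemann–Liouville fractional derivative of order α of f at t₀ satisfies D^α f(t₀) ≥ (t₀^{−α}/Γ(1−α)) f(t₀). In particular, if f(t₀) ≥ 0 then D^α f(t₀) ≥ 0. -/
open Set MeasureTheory intervalIntegral

/-- Riemann–Liouville fractional integral of order `β` with base point `0`. -/
noncomputable def rlInt (β : ℝ) (f : ℝ → ℝ) (t : ℝ) : ℝ :=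
  (1 / Real.Gamma β) * ∫ s in (0:ℝ)..t, (t - s) ^ (β - 1) * f s

/-- Riemann–Liouville fractional derivative of order `α` (`0 < α < 1`) with base point `0`:
`D^α f = d/dt [I^{1-α} f]`. -/
noncomputable def rlDeriv (α : ℝ) (f : ℝ → ℝ) (t : ℝ) : ℝ :=
  deriv (rlInt (1 - α) f) t

/-- Extremum principle for the Riemann–Liouville fractional derivative: at an interior
maximum point `t₀` of a `C¹` function on `[0,T]`, one has
`D^α f(t₀) ≥ (t₀^{-α}/Γ(1-α)) f(t₀)`; in particular `D^α f(t₀) ≥ 0` if `f(t₀) ≥ 0`. -/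
theorem rlDeriv_at_max (α T : ℝ) (hα0 : 0 < α) (hα1 : α < 1) (hT : 0 < T)
    (f : ℝ → ℝ) (hf : ContDiffOn ℝ 1 f (Icc 0 T))
    (t₀ : ℝ) (ht₀ : t₀ ∈ Ioo 0 T) (hmax : IsMaxOn f (Icc 0 T) t₀) :
    t₀ ^ (-α) / Real.Gamma (1 - α) * f t₀ ≤ rlDeriv α f t₀ ∧
      (0 ≤ f t₀ → 0 ≤ rlDeriv α f t₀) := by
  obtain ⟨ht0, htT⟩ := ht₀
  have hc : 0 < Real.Gamma (1 - α) := Real.Gamma_pos_of_pos (by linarith)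
  have hUD : UniqueDiffOn ℝ (Icc (0:ℝ) T) := uniqueDiffOn_Icc hT
  have hfd : DifferentiableOn ℝ f (Icc 0 T) := hf.differentiableOn one_ne_zero
  have hfc : ContinuousOn f (Icc 0 T) := hf.continuousOn
  have hf'c : ContinuousOn (derivWithin f (Icc 0 T)) (Icc 0 T) :=
    hf.continuousOn_derivWithin hUD le_rfl
  obtain ⟨M, hM⟩ := isCompact_Icc.exists_bound_of_continuousOn hf'c
  obtain ⟨B, hB⟩ := isCompact_Icc.exists_bound_of_continuousOn hfc
  have hM0 : 0 ≤ M := le_trans (norm_nonneg _) (hM 0 ⟨le_rfl, hT.le⟩)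
  -- deriv facts on the interior
  have hdAt : ∀ x ∈ Ioo (0:ℝ) T, HasDerivAt f (deriv f x) x := fun x hx =>
    (hfd.differentiableAt (Icc_mem_nhds hx.1 hx.2)).hasDerivAt
  have hMd : ∀ x ∈ Ioo (0:ℝ) T, |deriv f x| ≤ M := by
    intro x hx
    have h1 : derivWithin f (Icc 0 T) x = deriv f x :=
      derivWithin_of_mem_nhds (Icc_mem_nhds hx.1 hx.2)
    have := hM x ⟨hx.1.le, hx.2.le⟩
    rwa [h1, Real.norm_eq_abs] at this
  -- Lipschitz bound
  have hlip : ∀ x ∈ Icc (0:ℝ) T, ∀ y ∈ Icc (0:ℝ) T, |f y - f x| ≤ M * |y - x| := by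
    intro x hx y hy
    have := Convex.norm_image_sub_le_of_norm_derivWithin_le hfd hM (convex_Icc 0 T) hx hy
    simpa [Real.norm_eq_abs] using this
  -- membership helpers
  have hmemIcc : ∀ t ∈ Ioo (0:ℝ) T, ∀ u ∈ Icc (0:ℝ) 1, t * u ∈ Icc (0:ℝ) T := by
    intro t ht u hu
    constructor
    · exact mul_nonneg ht.1.le hu.1
    · nlinarith [ht.2, hu.2, ht.1.le, hu.1]
  have hmemIoo : ∀ t ∈ Ioo (0:ℝ) T, ∀ u ∈ Ioc (0:ℝ) 1, t * u ∈ Ioo (0:ℝ) T := by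
    intro t ht u hu
    constructor
    · exact mul_pos ht.1 hu.1
    · nlinarith [ht.2, hu.2, ht.1]
  -- measurability helpers
  have hKm : ∀ p : ℝ, Measurable fun u : ℝ => (1 - u) ^ p := fun p =>
    (measurable_const.sub measurable_id).pow measurable_const
  have hKnn : ∀ p : ℝ, ∀ u ∈ Icc (0:ℝ) 1, 0 ≤ (1 - u) ^ p := fun p u hu =>
    Real.rpow_nonneg (by linarith [hu.2]) p
  have hφcont : ∀ t ∈ Ioo (0:ℝ) T, ContinuousOn (fun u => f (t * u)) (Icc 0 1) := by
    intro t ht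
    exact hfc.comp (continuous_const.mul continuous_id).continuousOn
      (fun u hu => hmemIcc t ht u hu)
  have hφaesm : ∀ t ∈ Ioo (0:ℝ) T,
      AEStronglyMeasurable (fun u => f (t * u)) (volume.restrict (Ioc (0:ℝ) 1)) := by
    intro t ht
    exact ((hφcont t ht).mono Ioc_subset_Icc_self).aestronglyMeasurable measurableSet_Ioc
  have hdm : ∀ t : ℝ, Measurable fun u : ℝ => deriv f (t * u) :=
    fun t => (measurable_deriv f).comp (measurable_const.mul measurable_id)
  -- kernel integrability
  have hK : IntervalIntegrable (fun u : ℝ => (1 - u) ^ (-α)) volume 0 1 := by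
    have h1 : IntervalIntegrable (fun x : ℝ => x ^ (-α)) volume 0 1 :=
      intervalIntegrable_rpow' (by linarith)
    simpa using (h1.comp_sub_left 1).symm
  -- generic domination principle
  have hdom : ∀ (g : ℝ → ℝ) (C : ℝ),
      AEStronglyMeasurable g (volume.restrict (Ioc (0:ℝ) 1)) →
      (∀ u ∈ Ioc (0:ℝ) 1, |g u| ≤ C * (1 - u) ^ (-α)) →
      IntervalIntegrable g volume 0 1 := by
    intro g C hm hb
    apply (hK.const_mul C).mono_fun'
    · rwa [uIoc_of_le (zero_le_one (α := ℝ))]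
    · rw [uIoc_of_le (zero_le_one (α := ℝ))]
      exact (ae_restrict_iff' measurableSet_Ioc).2
        (ae_of_all _ fun u hu => by simpa [Real.norm_eq_abs] using hb u hu)
  -- rpow algebra helpers
  have hpow1 : ∀ u ∈ Icc (0:ℝ) 1, (1-u) ^ (-α) * (1-u) = (1-u) ^ ((1:ℝ)-α) := by
    intro u hu
    rcases eq_or_lt_of_le hu.2 with h | h
    · subst h
      norm_num [Real.zero_rpow (show -α ≠ 0 by linarith),
        Real.zero_rpow (show (1:ℝ)-α ≠ 0 by linarith)]
    · have h0 : (0:ℝ) < 1-u := by linarith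
      rw [← Real.rpow_add_one (ne_of_gt h0) (-α)]
      congr 1
      ring
  have hpow2 : ∀ u ∈ Icc (0:ℝ) 1, (1-u) ^ (-α-1) * (1-u) = (1-u) ^ (-α) := by
    intro u hu
    rcases eq_or_lt_of_le hu.2 with h | h
    · subst h
      norm_num [Real.zero_rpow (show -α ≠ 0 by linarith),
        Real.zero_rpow (show -α-1 ≠ 0 by intro hh; nlinarith)]
    · have h0 : (0:ℝ) < 1-u := by linarith
      rw [← Real.rpow_add_one (ne_of_gt h0) (-α-1)]
      congr 1
      ring
  -- derivative of u ↦ f (t₀ u)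
  have hφd : ∀ u ∈ Ioo (0:ℝ) 1, HasDerivAt (fun u => f (t₀*u)) (deriv f (t₀*u) * t₀) u := by
    intro u hu
    have hmem := hmemIoo t₀ ⟨ht0, htT⟩ u ⟨hu.1, hu.2.le⟩
    have hinner : HasDerivAt (fun u : ℝ => t₀ * u) t₀ u := by
      simpa using (hasDerivAt_id u).const_mul t₀
    exact (hdAt _ hmem).comp u hinner
  -- derivative of kernels
  have hker : ∀ p : ℝ, ∀ u ∈ Ioo (0:ℝ) 1,
      HasDerivAt (fun u : ℝ => (1-u) ^ p) (-(p * (1-u) ^ (p-1))) u := by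
    intro p u hu
    have h0 : (1:ℝ) - u ≠ 0 := by have := hu.2; intro h; linarith [hu.2]
    have h := Real.hasDerivAt_rpow_const (x := 1-u) (p := p) (Or.inl h0)
    have hinner : HasDerivAt (fun u : ℝ => 1 - u) (-1) u := by
      simpa using (hasDerivAt_id u).const_sub 1
    have h2 := h.comp u hinner
    refine h2.congr_deriv ?_
    ring
  -- substitution identity
  have hsub : ∀ t ∈ Ioo (0:ℝ) T, rlInt (1-α) f t
      = (1 / Real.Gamma (1-α)) *
        (t ^ ((1:ℝ)-α) * ∫ u in (0:ℝ)..1, (1-u) ^ (-α) * f (t*u)) := by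
    intro t ht
    unfold rlInt
    congr 1
    have ht' : (0:ℝ) < t := ht.1
    have h2 : EqOn (fun u : ℝ => (t - t*u) ^ ((1-α)-1) * f (t*u))
        (fun u : ℝ => t ^ (-α) * ((1-u) ^ (-α) * f (t*u))) (uIcc 0 1) := by
      intro u hu
      rw [uIcc_of_le (zero_le_one (α := ℝ))] at hu
      have h3 : t - t*u = t * (1-u) := by ring
      have h4 : ((1:ℝ)-α)-1 = -α := by ring
      simp only [h3, h4]
      rw [Real.mul_rpow ht'.le (by linarith [hu.2] : (0:ℝ) ≤ 1-u), mul_assoc]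
    calc (∫ s in (0:ℝ)..t, (t - s) ^ ((1-α)-1) * f s)
        = t • ∫ u in (0:ℝ)..1, (t - t*u) ^ ((1-α)-1) * f (t*u) := by
          rw [intervalIntegral.integral_comp_mul_left
            (fun s => (t - s) ^ ((1-α)-1) * f s) (ne_of_gt ht')]
          simp only [mul_zero, mul_one, smul_eq_mul, ← mul_assoc,
            mul_inv_cancel₀ (ne_of_gt ht'), one_mul]
      _ = t • ∫ u in (0:ℝ)..1, t ^ (-α) * ((1-u) ^ (-α) * f (t*u)) := by
          rw [intervalIntegral.integral_congr h2]
      _ = t ^ ((1:ℝ)-α) * ∫ u in (0:ℝ)..1, (1-u) ^ (-α) * f (t*u) := by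
          rw [intervalIntegral.integral_const_mul, smul_eq_mul, ← mul_assoc,
            show t * t ^ (-α) = t ^ ((1:ℝ)-α) by
              rw [show (1:ℝ)-α = 1 + -α by ring, Real.rpow_add ht', Real.rpow_one]]
  -- integrability of the basic integrand
  have hA1 : IntervalIntegrable (fun u => (1-u) ^ (-α) * f (t₀*u)) volume 0 1 := by
    refine hdom _ B (((hKm (-α)).aestronglyMeasurable).mul (hφaesm t₀ ⟨ht0, htT⟩)) ?_
    intro u hu
    have h1 : 0 ≤ (1-u) ^ (-α) := hKnn (-α) u (Ioc_subset_Icc_self hu)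
    have h2 : |f (t₀*u)| ≤ B := by
      have := hB _ (hmemIcc t₀ ⟨ht0, htT⟩ u (Ioc_subset_Icc_self hu))
      rwa [Real.norm_eq_abs] at this
    rw [abs_mul, abs_of_nonneg h1]
    nlinarith [abs_nonneg (f (t₀*u))]
  -- differentiation under the integral sign
  have hG : IntervalIntegrable (fun u => (1-u) ^ (-α) * (deriv f (t₀*u) * u)) volume 0 1 ∧
      HasDerivAt (fun t => ∫ u in (0:ℝ)..1, (1-u) ^ (-α) * f (t*u))
        (∫ u in (0:ℝ)..1, (1-u) ^ (-α) * (deriv f (t₀*u) * u)) t₀ := by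
    set ε := min t₀ (T - t₀) with hε_def
    have hε : 0 < ε := lt_min ht0 (by linarith)
    have hball : ∀ x ∈ Metric.ball t₀ ε, x ∈ Ioo (0:ℝ) T := by
      intro x hx
      rw [Metric.mem_ball, Real.dist_eq, abs_lt] at hx
      have h1 := min_le_left t₀ (T - t₀)
      have h2 := min_le_right t₀ (T - t₀)
      exact ⟨by linarith [hx.1], by linarith [hx.2]⟩
    apply intervalIntegral.hasDerivAt_integral_of_dominated_loc_of_deriv_le (Metric.ball_mem_nhds t₀ hε)
      (F' := fun t u => (1-u) ^ (-α) * (deriv f (t*u) * u))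
      (bound := fun u => M * (1-u) ^ (-α))
    · filter_upwards [Ioo_mem_nhds ht0 htT] with t ht
      rw [uIoc_of_le (zero_le_one (α := ℝ))]
      exact ((hKm (-α)).aestronglyMeasurable).mul (hφaesm t ht)
    · exact hA1
    · rw [uIoc_of_le (zero_le_one (α := ℝ))]
      exact ((hKm (-α)).mul ((hdm t₀).mul measurable_id)).aestronglyMeasurable
    · refine ae_of_all _ fun u hu t htb => ?_
      have hu' : u ∈ Ioc (0:ℝ) 1 := by rwa [uIoc_of_le (zero_le_one (α := ℝ))] at hu
      have h1 : 0 ≤ (1-u) ^ (-α) := hKnn (-α) u (Ioc_subset_Icc_self hu')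
      have h2 : |deriv f (t*u)| ≤ M := hMd _ (hmemIoo t (hball t htb) u hu')
      rw [Real.norm_eq_abs, abs_mul, abs_of_nonneg h1, abs_mul]
      have h3 : |u| ≤ 1 := by rw [abs_of_pos hu'.1]; exact hu'.2
      have h4 : (0:ℝ) ≤ |deriv f (t*u)| := abs_nonneg _
      have h5 : |deriv f (t*u)| * |u| ≤ M := by nlinarith
      calc (1-u) ^ (-α) * (|deriv f (t*u)| * |u|) ≤ (1-u) ^ (-α) * M :=
            mul_le_mul_of_nonneg_left h5 h1
        _ = M * (1-u) ^ (-α) := mul_comm _ _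
    · exact hK.const_mul M
    · refine ae_of_all _ fun u hu t htb => ?_
      have hu' : u ∈ Ioc (0:ℝ) 1 := by rwa [uIoc_of_le (zero_le_one (α := ℝ))] at hu
      have hmem := hmemIoo t (hball t htb) u hu'
      have hinner : HasDerivAt (fun t : ℝ => t * u) u t := hasDerivAt_mul_const u
      exact ((hdAt _ hmem).comp t hinner).const_mul _
  -- further integrable integrands
  have hA2 : IntervalIntegrable (fun u => (1-u) ^ ((1:ℝ)-α) * (deriv f (t₀*u) * t₀)) volume 0 1 := by
    refine hdom _ (M * t₀)
      (((hKm ((1:ℝ)-α)).mul ((hdm t₀).mul measurable_const)).aestronglyMeasurable) ?_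
    intro u hu
    have hu1 : (0:ℝ) ≤ 1 - u := by linarith [hu.2]
    have h1 : 0 ≤ (1-u) ^ (-α) := hKnn (-α) u (Ioc_subset_Icc_self hu)
    have h2 : |deriv f (t₀*u)| ≤ M := hMd _ (hmemIoo t₀ ⟨ht0, htT⟩ u hu)
    have h5 : (1-u) ^ ((1:ℝ)-α) ≤ (1-u) ^ (-α) := by
      rcases eq_or_lt_of_le hu1 with h | h
      · rw [← h]
        norm_num [Real.zero_rpow (show -α ≠ 0 by linarith),
          Real.zero_rpow (show (1:ℝ)-α ≠ 0 by linarith)]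
        
      · exact Real.rpow_le_rpow_of_exponent_ge h (by linarith [hu.1]) (by linarith)
    rw [abs_mul, abs_of_nonneg (hKnn ((1:ℝ)-α) u (Ioc_subset_Icc_self hu)), abs_mul,
      abs_of_pos ht0]
    calc (1-u) ^ ((1:ℝ)-α) * (|deriv f (t₀*u)| * t₀)
        = ((1-u) ^ ((1:ℝ)-α) * |deriv f (t₀*u)|) * t₀ := by ring
      _ ≤ ((1-u) ^ (-α) * M) * t₀ :=
          mul_le_mul_of_nonneg_right (mul_le_mul h5 h2 (abs_nonneg _) h1) ht0.le
      _ = M * t₀ * (1-u) ^ (-α) := by ring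
  have hB2 : IntervalIntegrable (fun u => (1-u) ^ (-α) * (deriv f (t₀*u) * t₀)) volume 0 1 := by
    refine hdom _ (M * t₀)
      (((hKm (-α)).mul ((hdm t₀).mul measurable_const)).aestronglyMeasurable) ?_
    intro u hu
    have h1 : 0 ≤ (1-u) ^ (-α) := hKnn (-α) u (Ioc_subset_Icc_self hu)
    have h2 : |deriv f (t₀*u)| ≤ M := hMd _ (hmemIoo t₀ ⟨ht0, htT⟩ u hu)
    rw [abs_mul, abs_of_nonneg h1, abs_mul, abs_of_pos ht0]
    calc (1-u) ^ (-α) * (|deriv f (t₀*u)| * t₀)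
        ≤ (1-u) ^ (-α) * (M * t₀) := by
          apply mul_le_mul_of_nonneg_left _ h1
          exact mul_le_mul_of_nonneg_right h2 ht0.le
      _ = M * t₀ * (1-u) ^ (-α) := by ring
  -- the Lipschitz-type bound near u = 1
  have hlip' : ∀ u ∈ Icc (0:ℝ) 1, |f t₀ - f (t₀*u)| ≤ M * t₀ * (1-u) := by
    intro u hu
    have h := hlip (t₀*u) (hmemIcc t₀ ⟨ht0, htT⟩ u hu) t₀ ⟨ht0.le, htT.le⟩
    have h2 : |t₀ - t₀*u| = t₀ * (1-u) := by
      rw [abs_of_nonneg (by nlinarith [hu.2, ht0.le] : (0:ℝ) ≤ t₀ - t₀*u)]; ring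
    rw [h2] at h
    linarith [h]
  have hB1 : IntervalIntegrable (fun u => (1-u) ^ (-α-1) * (f t₀ - f (t₀*u))) volume 0 1 := by
    refine hdom _ (M * t₀)
      (((hKm (-α-1)).aestronglyMeasurable).mul
        (aestronglyMeasurable_const.sub (hφaesm t₀ ⟨ht0, htT⟩))) ?_
    intro u hu
    have hu' := Ioc_subset_Icc_self hu
    have h1 : 0 ≤ (1-u) ^ (-α-1) := hKnn (-α-1) u hu'
    rw [abs_mul, abs_of_nonneg h1]
    calc (1-u) ^ (-α-1) * |f t₀ - f (t₀*u)|
        ≤ (1-u) ^ (-α-1) * (M * t₀ * (1-u)) :=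
          mul_le_mul_of_nonneg_left (hlip' u hu') h1
      _ = M * t₀ * ((1-u) ^ (-α-1) * (1-u)) := by ring
      _ = M * t₀ * (1-u) ^ (-α) := by rw [hpow2 u hu']
  -- Step A : FTC for W(u) = -((1-u)^(1-α) f(t₀ u))
  have stepA : (1-α) * (∫ u in (0:ℝ)..1, (1-u) ^ (-α) * f (t₀*u))
      - (∫ u in (0:ℝ)..1, (1-u) ^ ((1:ℝ)-α) * (deriv f (t₀*u) * t₀)) = f 0 := by
    have hWc : ContinuousOn (fun u : ℝ => -((1-u) ^ ((1:ℝ)-α) * f (t₀*u))) (Icc 0 1) := by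
      apply ContinuousOn.neg
      apply ContinuousOn.mul
      · exact ((continuous_const.sub continuous_id).continuousOn).rpow_const
          (fun u hu => Or.inr (by linarith))
      · exact hφcont t₀ ⟨ht0, htT⟩
    have hWd : ∀ u ∈ Ioo (0:ℝ) 1, HasDerivAt (fun u : ℝ => -((1-u) ^ ((1:ℝ)-α) * f (t₀*u)))
        ((1-α) * ((1-u) ^ (-α) * f (t₀*u)) - (1-u) ^ ((1:ℝ)-α) * (deriv f (t₀*u) * t₀)) u := by
      intro u hu
      have h := ((hker ((1:ℝ)-α) u hu).mul (hφd u hu)).neg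
      refine h.congr_deriv ?_
      rw [show (1:ℝ)-α-1 = -α by ring]
      ring
    have hFTC := intervalIntegral.integral_eq_sub_of_hasDerivAt_of_le zero_le_one hWc hWd
      ((hA1.const_mul (1-α)).sub hA2)
    rw [intervalIntegral.integral_sub (hA1.const_mul (1-α)) hA2,
      intervalIntegral.integral_const_mul] at hFTC
    rw [hFTC]
    norm_num [Real.zero_rpow (show (1:ℝ)-α ≠ 0 by linarith), Real.one_rpow]
  -- Step B : FTC for V(u) = (1-u)^(-α) (f t₀ - f(t₀ u))
  have stepB : α * (∫ u in (0:ℝ)..1, (1-u) ^ (-α-1) * (f t₀ - f (t₀*u)))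
      - (∫ u in (0:ℝ)..1, (1-u) ^ (-α) * (deriv f (t₀*u) * t₀)) = f 0 - f t₀ := by
    have hgc : ContinuousOn (fun u : ℝ => (1-u) ^ ((1:ℝ)-α)) (Icc 0 1) :=
      ((continuous_const.sub continuous_id).continuousOn).rpow_const
        (fun u hu => Or.inr (by linarith))
    have hVc : ContinuousOn (fun u : ℝ => (1-u) ^ (-α) * (f t₀ - f (t₀*u))) (Icc 0 1) := by
      intro x hx
      rcases eq_or_lt_of_le hx.2 with hx1 | hx1
      · subst hx1
        rw [ContinuousWithinAt]
        have hV1 : ((1:ℝ)-1) ^ (-α) * (f t₀ - f (t₀*1)) = 0 := by norm_num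
        rw [hV1]
        apply squeeze_zero_norm'
        · filter_upwards [self_mem_nhdsWithin] with u hu
          have h1 : 0 ≤ (1-u) ^ (-α) := hKnn (-α) u hu
          calc ‖(1-u) ^ (-α) * (f t₀ - f (t₀*u))‖
              = (1-u) ^ (-α) * |f t₀ - f (t₀*u)| := by
                rw [Real.norm_eq_abs, abs_mul, abs_of_nonneg h1]
            _ ≤ (1-u) ^ (-α) * (M * t₀ * (1-u)) :=
                mul_le_mul_of_nonneg_left (hlip' u hu) h1
            _ = M * t₀ * ((1-u) ^ (-α) * (1-u)) := by ring
            _ = M * t₀ * (1-u) ^ ((1:ℝ)-α) := by rw [hpow1 u hu]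
        · have h0 := (hgc 1 ⟨zero_le_one, le_rfl⟩).tendsto
          have h1 : ((1:ℝ)-1) ^ ((1:ℝ)-α) = 0 := by
            norm_num [Real.zero_rpow (show (1:ℝ)-α ≠ 0 by linarith)]
          have h2 := h0.const_mul (M * t₀)
          rw [h1, mul_zero] at h2
          exact h2
      · apply ContinuousWithinAt.mul
        · apply ContinuousAt.continuousWithinAt
          have hcont : ContinuousAt (fun u : ℝ => 1 - u) x :=
            (continuous_const.sub continuous_id).continuousAt
          exact (Real.continuousAt_rpow_const (1-x) (-α) (Or.inl (by linarith))).comp hcont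
        · exact continuousWithinAt_const.sub ((hφcont t₀ ⟨ht0, htT⟩) x hx)
    have hVd : ∀ u ∈ Ioo (0:ℝ) 1,
        HasDerivAt (fun u : ℝ => (1-u) ^ (-α) * (f t₀ - f (t₀*u)))
          (α * ((1-u) ^ (-α-1) * (f t₀ - f (t₀*u))) - (1-u) ^ (-α) * (deriv f (t₀*u) * t₀)) u := by
      intro u hu
      have h := (hker (-α) u hu).mul ((hφd u hu).const_sub (f t₀))
      refine h.congr_deriv ?_
      ring
    have hFTC := intervalIntegral.integral_eq_sub_of_hasDerivAt_of_le zero_le_one hVc hVd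
      ((hB1.const_mul α).sub hB2)
    rw [intervalIntegral.integral_sub (hB1.const_mul α) hB2,
      intervalIntegral.integral_const_mul] at hFTC
    rw [hFTC]
    norm_num [Real.one_rpow]
  -- combination identity
  have hcomb : (∫ u in (0:ℝ)..1, (1-u) ^ ((1:ℝ)-α) * (deriv f (t₀*u) * t₀))
      + t₀ * (∫ u in (0:ℝ)..1, (1-u) ^ (-α) * (deriv f (t₀*u) * u))
      = ∫ u in (0:ℝ)..1, (1-u) ^ (-α) * (deriv f (t₀*u) * t₀) := by
    rw [← intervalIntegral.integral_const_mul,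
      ← intervalIntegral.integral_add hA2 (hG.1.const_mul t₀)]
    apply intervalIntegral.integral_congr
    intro u hu
    rw [uIcc_of_le (zero_le_one (α := ℝ))] at hu
    show (1-u) ^ ((1:ℝ)-α) * (deriv f (t₀*u) * t₀) + t₀ * ((1-u) ^ (-α) * (deriv f (t₀*u) * u))
        = (1-u) ^ (-α) * (deriv f (t₀*u) * t₀)
    rw [← hpow1 u hu]
    ring
  -- positivity of the remainder integral
  have hI5 : 0 ≤ ∫ u in (0:ℝ)..1, (1-u) ^ (-α-1) * (f t₀ - f (t₀*u)) := by
    apply intervalIntegral.integral_nonneg zero_le_one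
    intro u hu
    exact mul_nonneg (hKnn (-α-1) u hu)
      (sub_nonneg.2 (hmax (hmemIcc t₀ ⟨ht0, htT⟩ u hu)))
  -- the key inequality
  have key : f t₀ ≤ (1-α) * (∫ u in (0:ℝ)..1, (1-u) ^ (-α) * f (t₀*u))
      + t₀ * (∫ u in (0:ℝ)..1, (1-u) ^ (-α) * (deriv f (t₀*u) * u)) := by
    nlinarith [stepA, stepB, hcomb, mul_nonneg hα0.le hI5]
  -- derivative of rlInt at t₀
  have hr : HasDerivAt (fun t : ℝ => t ^ ((1:ℝ)-α)) ((1-α) * t₀ ^ ((1:ℝ)-α-1)) t₀ :=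
    Real.hasDerivAt_rpow_const (Or.inl (ne_of_gt ht0))
  have hp := (hr.mul hG.2).const_mul (1 / Real.Gamma (1-α))
  have hEq : rlInt (1-α) f =ᶠ[nhds t₀]
      fun t => (1 / Real.Gamma (1-α)) *
        (t ^ ((1:ℝ)-α) * ∫ u in (0:ℝ)..1, (1-u) ^ (-α) * f (t*u)) := by
    filter_upwards [Ioo_mem_nhds ht0 htT] with t ht using hsub t ht
  have hD := hp.congr_of_eventuallyEq hEq
  have hpow : t₀ ^ ((1:ℝ)-α) = t₀ ^ (-α) * t₀ := by
    rw [show (1:ℝ)-α = -α + 1 by ring, Real.rpow_add ht0, Real.rpow_one]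
  have hpow' : t₀ ^ ((1:ℝ)-α-1) = t₀ ^ (-α) := by norm_num
  have hrd : rlDeriv α f t₀ = t₀ ^ (-α) / Real.Gamma (1-α) *
      ((1-α) * (∫ u in (0:ℝ)..1, (1-u) ^ (-α) * f (t₀*u))
        + t₀ * (∫ u in (0:ℝ)..1, (1-u) ^ (-α) * (deriv f (t₀*u) * u))) := by
    unfold rlDeriv
    rw [hD.deriv]
    rw [hpow, hpow']
    ring
  have hpos : 0 < t₀ ^ (-α) / Real.Gamma (1-α) :=
    div_pos (Real.rpow_pos_of_pos ht0 _) hc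
  have hmain : t₀ ^ (-α) / Real.Gamma (1 - α) * f t₀ ≤ rlDeriv α f t₀ := by
    rw [hrd]
    exact mul_le_mul_of_nonneg_left key hpos.le
  exact ⟨hmain, fun h0 => le_trans (mul_nonneg hpos.le h0) hmain⟩
end
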